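/- arXiv:1502.07847 — 7 statements merged into one kernel-verified Lean document; each statement's English description precedes it below -/
import Mathlib

section
/- Let Y, Z, W_ij ∈ ℂ and W_ii, W_jj ∈ ℝ with Y ≠ 0 and Z = Y⁻¹, and define S_ij = conj(Y)·W_ii − conj(Y)·W_ij and S_ji = conj(Y)·W_jj − conj(Y)·conj(W_ij) (real numbers coerced to ℂ). Then |W_ij|² ≤ W_ii·W_jj holds if and only if there exists l ∈ ℝ such that S_ij + S_ji = Z·l and |S_ij|² ≤ W_ii·l. -/
/-- Theorem 1: the W-SOC constraint is equivalent to the C-SOC system. -/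
theorem wsoc_iff_csoc (Y Z Wij Sij Sji : ℂ) (Wii Wjj : ℝ)
    (hY : Y ≠ 0) (hZ : Z = Y⁻¹)
    (hSij : Sij = (starRingEnd ℂ) Y * (Wii : ℂ) - (starRingEnd ℂ) Y * Wij)
    (hSji : Sji = (starRingEnd ℂ) Y * (Wjj : ℂ) - (starRingEnd ℂ) Y * (starRingEnd ℂ) Wij) :
    ‖Wij‖ ^ 2 ≤ Wii * Wjj ↔
      ∃ l : ℝ, Sij + Sji = Z * (l : ℂ) ∧ ‖Sij‖ ^ 2 ≤ Wii * l := by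
  set r : ℝ := Wii + Wjj - 2 * Wij.re with hr
  have hsum : Sij + Sji = (starRingEnd ℂ) Y * (r : ℂ) := by
    rw [hSij, hSji]
    have h2 : Wij + (starRingEnd ℂ) Wij = (2 * Wij.re : ℝ) := by
      push_cast
      rw [Complex.add_conj]
      push_cast; ring
    have : (r : ℂ) = (Wii : ℂ) + Wjj - (Wij + (starRingEnd ℂ) Wij) := by
      rw [h2, hr]; push_cast; ring
    rw [this]; ring
  have hnsY : 0 < Complex.normSq Y := Complex.normSq_pos.mpr hY
  have habsSij : ‖Sij‖ ^ 2 =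
      Complex.normSq Y * ((Wii - Wij.re) ^ 2 + Wij.im ^ 2) := by
    rw [Complex.sq_norm, hSij]
    have : (starRingEnd ℂ) Y * (Wii : ℂ) - (starRingEnd ℂ) Y * Wij
        = (starRingEnd ℂ) Y * ((Wii : ℂ) - Wij) := by ring
    rw [this, Complex.normSq_mul, Complex.normSq_conj]
    congr 1
    rw [Complex.normSq_apply]
    simp [Complex.sub_re, Complex.sub_im]
    ring
  have habsWij : ‖Wij‖ ^ 2 = Wij.re ^ 2 + Wij.im ^ 2 := by
    rw [Complex.sq_norm, Complex.normSq_apply]; ring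
  constructor
  · intro h
    refine ⟨Complex.normSq Y * r, ?_, ?_⟩
    · rw [hsum, hZ]
      rw [show ((Complex.normSq Y * r : ℝ) : ℂ) = (Y * (starRingEnd ℂ) Y) * (r : ℂ) by
        rw [Complex.mul_conj]; push_cast; ring]
      field_simp
    · rw [habsSij]
      rw [habsWij] at h
      rw [hr]
      nlinarith [mul_nonneg hnsY.le (sub_nonneg.mpr h)]
  · rintro ⟨l, heq, hle⟩
    rw [hsum, hZ] at heq
    have hlval : (l : ℂ) = (Complex.normSq Y * r : ℝ) := by
      have : Y * ((starRingEnd ℂ) Y * (r : ℂ)) = Y * (Y⁻¹ * l) := by rw [heq]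
      rw [mul_inv_cancel_left₀ hY] at this
      rw [← this, ← mul_assoc, Complex.mul_conj]
      push_cast; ring
    have hl : l = Complex.normSq Y * r := by exact_mod_cast hlval
    rw [habsSij] at hle
    rw [hl] at hle
    rw [habsWij]
    rw [hr] at hle
    nlinarith [hnsY, hle, mul_pos hnsY (show (0:ℝ) < 1 by norm_num)]
end

section
/- Let Y, Z, W_ij, S_ij, S_ji ∈ ℂ and W_ii, W_jj, l ∈ ℝ with Y ≠ 0 and Z = Y⁻¹. Assume S_ij = conj(Y)·W_ii − conj(Y)·W_ij, S_ji = conj(Y)·W_jj − conj(Y)·conj(W_ij), S_ij + S_ji = Z·l, and |S_ij|² ≤ W_ii·l. Then |W_ij|² ≤ W_ii·W_jj. -/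
/-- Property (3) of Theorem 2 (QC ⊆ SOC). -/
theorem qc_subset_soc (Y Z Wij Sij Sji : ℂ) (Wii Wjj l : ℝ)
    (hY : Y ≠ 0) (hZ : Z = Y⁻¹)
    (hSij : Sij = (starRingEnd ℂ) Y * (Wii : ℂ) - (starRingEnd ℂ) Y * Wij)
    (hSji : Sji = (starRingEnd ℂ) Y * (Wjj : ℂ) - (starRingEnd ℂ) Y * (starRingEnd ℂ) Wij)
    (hloss : Sij + Sji = Z * (l : ℂ))
    (hsoc : ‖Sij‖ ^ 2 ≤ Wii * l) :
    ‖Wij‖ ^ 2 ≤ Wii * Wjj := by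
  have hY2 : (0:ℝ) < Complex.normSq Y := Complex.normSq_pos.mpr hY
  -- derive the real expression for l
  have hC : ((l:ℂ)) = (Complex.normSq Y : ℂ) * ((Wii:ℂ) + Wjj - 2 * Wij.re) := by
    have h1 : Y * (Sij + Sji) = (l:ℂ) := by
      rw [hloss, hZ]
      field_simp
    rw [hSij, hSji] at h1
    rw [← h1]
    have h2 : Y * (starRingEnd ℂ) Y = (Complex.normSq Y : ℂ) := Complex.mul_conj Y
    have h3 : Wij + (starRingEnd ℂ) Wij = 2 * (Wij.re : ℂ) := by
      rw [Complex.add_conj]; push_cast; ring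
    calc Y * ((starRingEnd ℂ) Y * (Wii:ℂ) - (starRingEnd ℂ) Y * Wij +
          ((starRingEnd ℂ) Y * (Wjj:ℂ) - (starRingEnd ℂ) Y * (starRingEnd ℂ) Wij))
        = (Y * (starRingEnd ℂ) Y) * ((Wii:ℂ) + Wjj - (Wij + (starRingEnd ℂ) Wij)) := by ring
      _ = (Complex.normSq Y : ℂ) * ((Wii:ℂ) + Wjj - 2 * Wij.re) := by rw [h2, h3]
  have hl : l = Complex.normSq Y * (Wii + Wjj - 2 * Wij.re) := by
    have := congrArg Complex.re hC
    simpa using this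
  have habs : ‖Sij‖ ^ 2 = Complex.normSq Y * ((Wii - Wij.re)^2 + Wij.im^2) := by
    rw [← Complex.normSq_eq_norm_sq, hSij]
    have : (starRingEnd ℂ) Y * (Wii:ℂ) - (starRingEnd ℂ) Y * Wij
        = (starRingEnd ℂ) Y * ((Wii:ℂ) - Wij) := by ring
    rw [this, Complex.normSq_mul, Complex.normSq_conj]
    congr 1
    simp [Complex.normSq_apply, Complex.sub_re, Complex.sub_im]
    ring
  have habsW : ‖Wij‖ ^ 2 = Wij.re^2 + Wij.im^2 := by
    rw [← Complex.normSq_eq_norm_sq]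
    simp [Complex.normSq_apply]; ring
  rw [habsW]
  rw [habs, hl] at hsoc
  nlinarith [hY2, sq_nonneg Wij.im, sq_nonneg (Wii - Wij.re)]
end

section
/- Let u, x ∈ ℝ with 0 < u ≤ π/2 and |x| ≤ u. Then cos(u/2)·(x + u/2) − sin(u/2) ≤ sin(x) and sin(x) ≤ cos(u/2)·(x − u/2) + sin(u/2). -/
open Real

lemma sinEnv_sin_le_self {x : ℝ} (h : 0 ≤ x) : Real.sin x ≤ x := by
  rcases h.eq_or_lt with h' | h'
  · simp [← h']
  · exact (Real.sin_lt h').le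

lemma sinEnv_self_le_sin {x : ℝ} (h : x ≤ 0) : x ≤ Real.sin x := by
  have := sinEnv_sin_le_self (x := -x) (by linarith)
  rw [Real.sin_neg] at this
  linarith

lemma sinEnv_mul_cos_le_sin {x : ℝ} (h0 : 0 ≤ x) (h1 : x < Real.pi / 2) :
    x * Real.cos x ≤ Real.sin x := by
  rcases h0.eq_or_lt with h' | h'
  · simp [← h']
  · have hc : 0 < Real.cos x := Real.cos_pos_of_mem_Ioo ⟨by linarith [Real.pi_pos], h1⟩
    have ht := Real.lt_tan h' h1
    rw [Real.tan_eq_sin_div_cos] at ht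
    have := (lt_div_iff₀ hc).mp ht
    linarith

lemma sinEnv_sin_ge_cubic {t : ℝ} (ht : 0 ≤ t) : t - t ^ 3 / 6 ≤ Real.sin t := by
  have hder : ∀ s : ℝ, HasDerivAt (fun s : ℝ => Real.sin s - (s - s ^ 3 / 6))
      (Real.cos s - (1 - 3 * s ^ 2 / 6)) s := by
    intro s
    have h1 : HasDerivAt Real.sin (Real.cos s) s := Real.hasDerivAt_sin s
    have h2 : HasDerivAt (fun s : ℝ => s - s ^ 3 / 6) (1 - 3 * s ^ 2 / 6) s := by
      have := ((hasDerivAt_pow 3 s).div_const 6)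
      exact ((hasDerivAt_id' s).sub this).congr_deriv (by norm_num <;> ring)
    exact h1.sub h2
  have hmono : MonotoneOn (fun s : ℝ => Real.sin s - (s - s ^ 3 / 6)) (Set.Ici 0) := by
    apply monotoneOn_of_deriv_nonneg (convex_Ici 0)
    · exact (Real.continuous_sin.sub (by continuity)).continuousOn
    · exact fun s _ => ((hder s).differentiableAt.differentiableWithinAt)
    · intro s _
      rw [(hder s).deriv]
      have := Real.one_sub_sq_div_two_le_cos (x := s)
      nlinarith [sq_nonneg s]
  have := hmono Set.self_mem_Ici (Set.mem_Ici.mpr ht) ht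
  simp at this
  linarith

lemma sinEnv_cos_le_quartic {t : ℝ} (ht : 0 ≤ t) :
    Real.cos t ≤ 1 - t ^ 2 / 2 + t ^ 4 / 24 := by
  have hder : ∀ s : ℝ, HasDerivAt (fun s : ℝ => (1 - s ^ 2 / 2 + s ^ 4 / 24) - Real.cos s)
      ((0 - 2 * s / 2 + 4 * s ^ 3 / 24) - (-Real.sin s)) s := by
    intro s
    have h1 : HasDerivAt (fun s : ℝ => 1 - s ^ 2 / 2 + s ^ 4 / 24)
        (0 - 2 * s / 2 + 4 * s ^ 3 / 24) s := by
      have hp2 := ((hasDerivAt_pow 2 s).div_const 2)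
      have hp4 := ((hasDerivAt_pow 4 s).div_const 24)
      exact (((hasDerivAt_const s (1:ℝ)).sub hp2).add hp4).congr_deriv (by norm_num <;> ring)
    exact h1.sub (Real.hasDerivAt_cos s)
  have hmono : MonotoneOn (fun s : ℝ => (1 - s ^ 2 / 2 + s ^ 4 / 24) - Real.cos s) (Set.Ici 0) := by
    apply monotoneOn_of_deriv_nonneg (convex_Ici 0)
    · exact ((by continuity : Continuous fun s : ℝ => 1 - s ^ 2 / 2 + s ^ 4 / 24).sub
        Real.continuous_cos).continuousOn
    · exact fun s _ => ((hder s).differentiableAt.differentiableWithinAt)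
    · intro s hs
      have hs0 : (0 : ℝ) ≤ s := le_of_lt (by simpa using hs)
      rw [(hder s).deriv]
      have := sinEnv_sin_ge_cubic hs0
      nlinarith
  have := hmono Set.self_mem_Ici (Set.mem_Ici.mpr ht) ht
  simp at this
  linarith

/-- Key inequality: `3 t cos t ≤ sin t (2 cos t + 1)` for `0 ≤ t ≤ π/4`. -/
lemma sinEnv_key {t : ℝ} (ht0 : 0 ≤ t) (ht : t ≤ Real.pi / 4) :
    3 * t * Real.cos t ≤ Real.sin t * (2 * Real.cos t + 1) := by
  have hpi : Real.pi < 3.15 := by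
    have := Real.pi_lt_d2
    linarith
  have ht1 : t ≤ 0.7875 := by linarith
  have hs := sinEnv_sin_ge_cubic ht0
  have hc1 := Real.one_sub_sq_div_two_le_cos (x := t)
  have hc2 := sinEnv_cos_le_quartic ht0
  have hcub : 0 ≤ t - t ^ 3 / 6 := by nlinarith
  have h1 : (t - t ^ 3 / 6) * (3 - t ^ 2) ≤ Real.sin t * (2 * Real.cos t + 1) := by
    apply mul_le_mul hs (by nlinarith) (by nlinarith) (by linarith)
  nlinarith [pow_nonneg ht0 5]

set_option maxHeartbeats 1000000 in
/-- Lower envelope bound. -/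
lemma sinEnv_lower (u x : ℝ) (hu0 : 0 < u) (hu1 : u ≤ Real.pi / 2)
    (hx : |x| ≤ u) :
    Real.cos (u / 2) * (x + u / 2) - Real.sin (u / 2) ≤ Real.sin x := by
  have hxl : -u ≤ x := neg_le_of_abs_le hx
  have hxu : x ≤ u := le_of_abs_le hx
  have hpi : 0 < Real.pi := Real.pi_pos
  have hcpos : 0 < Real.cos (u / 2) :=
    Real.cos_pos_of_mem_Ioo ⟨by linarith, by linarith⟩
  set c := Real.cos (u / 2) with hc
  set s := Real.sin (u / 2) with hs
  clear_value c s
  rcases le_or_gt x (-(u / 2)) with hA | hA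
  · -- Case A : -u ≤ x ≤ -u/2
    have hid : Real.sin x - Real.sin (-(u / 2)) =
        2 * Real.sin ((x + u / 2) / 2) * Real.cos ((x - u / 2) / 2) := by
      have := Real.sin_sub_sin x (-(u / 2))
      rw [this]; ring_nf
    set a := (x + u / 2) / 2 with ha
    set b := (x - u / 2) / 2 with hb
    have ha0 : a ≤ 0 := by rw [ha]; linarith
    have hsa : a ≤ Real.sin a := sinEnv_self_le_sin ha0
    have hb1 : -(Real.pi / 2) < b := by rw [hb]; linarith
    have hb2 : b ≤ 0 := by rw [hb]; linarith
    have hcb0 : 0 ≤ Real.cos b :=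
      (Real.cos_pos_of_mem_Ioo ⟨hb1, by linarith⟩).le
    have hcbc : Real.cos b ≤ c := by
      rw [← Real.cos_abs b, hc]
      apply Real.cos_le_cos_of_nonneg_of_le_pi (by linarith)
      · rw [abs_of_nonpos hb2, hb]; linarith
      · rw [abs_of_nonpos hb2, hb]; linarith
    have h1 : 2 * a * Real.cos b ≤ 2 * Real.sin a * Real.cos b := by
      nlinarith
    have h2 : 2 * a * c ≤ 2 * a * Real.cos b := by
      nlinarith
    have hsneg : Real.sin (-(u / 2)) = -s := by rw [hs, Real.sin_neg]
    have h2a : 2 * a = x + u / 2 := by rw [ha]; ring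
    nlinarith [hid]
  rcases le_or_gt x (u / 2) with hB | hB
  · -- Case B : -u/2 ≤ x ≤ u/2
    have hid : Real.sin x - Real.sin (-(u / 2)) =
        2 * Real.sin ((x + u / 2) / 2) * Real.cos ((x - u / 2) / 2) := by
      have := Real.sin_sub_sin x (-(u / 2))
      rw [this]; ring_nf
    set a := (x + u / 2) / 2 with ha
    set b := (x - u / 2) / 2 with hb
    have ha0 : 0 ≤ a := by rw [ha]; linarith
    have ha1 : a < Real.pi / 2 := by rw [ha]; linarith
    have hsa : a * Real.cos a ≤ Real.sin a := sinEnv_mul_cos_le_sin ha0 ha1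
    have hcb0 : 0 ≤ Real.cos b :=
      (Real.cos_pos_of_mem_Ioo ⟨by rw [hb]; linarith, by rw [hb]; linarith⟩).le
    have hsum : 2 * Real.cos a * Real.cos b = Real.cos x + c := by
      have hxab : x = a + b := by rw [ha, hb]; ring
      have huab : u / 2 = a - b := by rw [ha, hb]; ring
      rw [hc, hxab, huab, Real.cos_add, Real.cos_sub]; ring
    have hcx : c ≤ Real.cos x := by
      rw [← Real.cos_abs x, hc]
      apply Real.cos_le_cos_of_nonneg_of_le_pi (abs_nonneg x) (by linarith)
      rcases abs_cases x with ⟨h, _⟩ | ⟨h, _⟩ <;> rw [h] <;> linarith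
    have h1 : 2 * (a * Real.cos a) * Real.cos b ≤ 2 * Real.sin a * Real.cos b := by
      nlinarith
    have h2 : a * (2 * c) ≤ a * (Real.cos x + c) := by
      nlinarith
    have h3 : a * (Real.cos x + c) = 2 * (a * Real.cos a) * Real.cos b := by
      rw [← hsum]; ring
    have hsneg : Real.sin (-(u / 2)) = -s := by rw [hs, Real.sin_neg]
    have h2a : 2 * a = x + u / 2 := by rw [ha]; ring
    nlinarith [hid]
  · -- Case C : u/2 ≤ x ≤ u
    have hid : Real.sin x - Real.sin u =
        2 * Real.sin ((x - u) / 2) * Real.cos ((x + u) / 2) := Real.sin_sub_sin x u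
    set t := (u - x) / 2 with htdef
    set p := (x + u) / 2 with hp
    clear_value t p
    have ht0 : 0 ≤ t := by rw [htdef]; linarith
    have hst : Real.sin t ≤ t := sinEnv_sin_le_self ht0
    have hp1 : 0 ≤ p := by rw [hp]; linarith
    have hcp0 : 0 ≤ Real.cos p := by
      apply Real.cos_nonneg_of_mem_Icc
      constructor <;> [skip; skip] <;> rw [hp] <;> linarith
    have hcpc : Real.cos p ≤ c := by
      rw [hc]
      apply Real.cos_le_cos_of_nonneg_of_le_pi (by linarith) (by rw [hp]; linarith)
      rw [hp]; linarith
    have hnegt : Real.sin ((x - u) / 2) = -Real.sin t := by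
      rw [htdef, show (x - u) / 2 = -((u - x) / 2) by ring, Real.sin_neg]
    have hsin2 : Real.sin u = 2 * s * c := by
      rw [hs, hc, ← Real.sin_two_mul]
      congr 1; ring
    have hkey := sinEnv_key (t := u / 2) (by linarith) (by linarith)
    rw [← hs, ← hc] at hkey
    -- sin x ≥ sin u - 2 t cos p ≥ sin u - 2 t c
    have e : Real.sin x = Real.sin u - 2 * Real.sin t * Real.cos p := by
      rw [hnegt] at hid
      linear_combination hid
    have hprod : Real.sin t * Real.cos p ≤ t * c :=
      mul_le_mul hst hcpc hcp0 ht0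
    have h1 : Real.sin u - 2 * (t * c) ≤ Real.sin x := by
      rw [e]; linarith
    -- goal reduces to (3u/2) c ≤ sin u + s
    have ht2 : 2 * t = u - x := by rw [htdef]; ring
    have h2 : c * (x + u / 2) - s ≤ Real.sin u - 2 * (t * c) := by
      have h2tc : 2 * (t * c) = (u - x) * c := by rw [← ht2]; ring
      rw [h2tc, hsin2]
      nlinarith [hkey]
    linarith

/-- Validity of the sine convex envelope. -/
theorem sin_envelope (u x : ℝ) (hu0 : 0 < u) (hu1 : u ≤ Real.pi / 2)
    (hx : |x| ≤ u) :
    Real.cos (u / 2) * (x + u / 2) - Real.sin (u / 2) ≤ Real.sin x ∧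
      Real.sin x ≤ Real.cos (u / 2) * (x - u / 2) + Real.sin (u / 2) := by
  constructor
  · exact sinEnv_lower u x hu0 hu1 hx
  · have h := sinEnv_lower u (-x) hu0 hu1 (by rwa [abs_neg])
    rw [Real.sin_neg] at h
    linarith
end

section
/- Let Y, T, W_ij, S_ij ∈ ℂ and W_ii, b ∈ ℝ with T ≠ 0. If S_ij = (conj(Y) − i·b/2)·W_ii/|T|² − conj(Y)·W_ij/conj(T), then (as an identity in ℂ, with real numbers coerced) |S_ij|² = |Y|²·( W_ii²/|T|⁴ − (W_ii/|T|²)·(W_ij/conj(T)) − (W_ii/|T|²)·(conj(W_ij)/T) + |W_ij|²/|T|² ) − (b/2)²·W_ii²/|T|⁴ − b·(W_ii/|T|²)·Im(S_ij). -/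
set_option maxHeartbeats 1000000 in
/-- Extended Property 1: the absolute square of power, with tap ratio and line charging. -/
theorem abs_sq_power_ext (Y T Wij Sij : ℂ) (Wii b : ℝ) (hT : T ≠ 0)
    (hS : Sij = ((starRingEnd ℂ) Y - Complex.I * (b : ℂ) / 2) * (Wii : ℂ)
        / ((‖T‖ : ℝ) ^ 2 : ℂ)
      - (starRingEnd ℂ) Y * Wij / (starRingEnd ℂ) T) :
    ((‖Sij‖ : ℝ) ^ 2 : ℂ) =
      ((‖Y‖ : ℝ) ^ 2 : ℂ) *
        ( (Wii : ℂ) ^ 2 / ((‖T‖ : ℝ) ^ 4 : ℂ)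
          - ((Wii : ℂ) / ((‖T‖ : ℝ) ^ 2 : ℂ)) * (Wij / (starRingEnd ℂ) T)
          - ((Wii : ℂ) / ((‖T‖ : ℝ) ^ 2 : ℂ)) * ((starRingEnd ℂ) Wij / T)
          + ((‖Wij‖ : ℝ) ^ 2 : ℂ) / ((‖T‖ : ℝ) ^ 2 : ℂ) )
      - ((b : ℂ) / 2) ^ 2 * (Wii : ℂ) ^ 2 / ((‖T‖ : ℝ) ^ 4 : ℂ)
      - (b : ℂ) * ((Wii : ℂ) / ((‖T‖ : ℝ) ^ 2 : ℂ)) * (Sij.im : ℂ) := by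
  have key : ∀ z : ℂ, ((‖z‖ : ℝ) : ℂ) ^ 2 = z * (starRingEnd ℂ) z := by
    intro z
    rw [Complex.mul_conj]
    norm_cast
    exact Complex.sq_norm z
  have hT' : (starRingEnd ℂ) T ≠ 0 := by simpa using hT
  have hA0 : ((‖T‖ : ℝ) : ℂ) ^ 2 ≠ 0 := by
    rw [key T]; exact mul_ne_zero hT hT'
  have him : (Sij.im : ℂ) = ((starRingEnd ℂ) Sij - Sij) * Complex.I / 2 := by
    have h := Complex.sub_conj Sij
    push_cast at h
    rw [eq_div_iff (two_ne_zero)]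
    linear_combination Complex.I * h + 2 * (Sij.im : ℂ) * Complex.I_mul_I
  have hQ : Sij + Complex.I * ((b : ℂ) * (Wii : ℂ) / (2 * ((‖T‖ : ℝ) : ℂ) ^ 2))
      = (starRingEnd ℂ) Y * ((Wii : ℂ) / ((‖T‖ : ℝ) : ℂ) ^ 2 - Wij / (starRingEnd ℂ) T) := by
    rw [hS]
    field_simp
    ring
  have hQc : (starRingEnd ℂ) Sij
        - Complex.I * ((b : ℂ) * (Wii : ℂ) / (2 * ((‖T‖ : ℝ) : ℂ) ^ 2))
      = Y * ((Wii : ℂ) / ((‖T‖ : ℝ) : ℂ) ^ 2 - (starRingEnd ℂ) Wij / T) := by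
    have h := congrArg (starRingEnd ℂ) hQ
    simp only [map_add, map_sub, map_mul, map_div₀, Complex.conj_conj, Complex.conj_I,
      Complex.conj_ofReal, map_pow, map_ofNat] at h
    linear_combination h
  have hs2 : Sij * (starRingEnd ℂ) Sij
      = (Sij + Complex.I * ((b : ℂ) * (Wii : ℂ) / (2 * ((‖T‖ : ℝ) : ℂ) ^ 2)))
          * ((starRingEnd ℂ) Sij
              - Complex.I * ((b : ℂ) * (Wii : ℂ) / (2 * ((‖T‖ : ℝ) : ℂ) ^ 2)))
        - ((b : ℂ) * (Wii : ℂ) / (2 * ((‖T‖ : ℝ) : ℂ) ^ 2)) ^ 2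
        - 2 * ((b : ℂ) * (Wii : ℂ) / (2 * ((‖T‖ : ℝ) : ℂ) ^ 2)) * (Sij.im : ℂ) := by
    linear_combination (2 : ℂ) * ((b : ℂ) * (Wii : ℂ) / (2 * ((‖T‖ : ℝ) : ℂ) ^ 2)) * him
      + ((b : ℂ) * (Wii : ℂ) / (2 * ((‖T‖ : ℝ) : ℂ) ^ 2)) ^ 2 * Complex.I_sq
  have h4 : ((‖T‖ : ℝ) : ℂ) ^ 4 = (T * (starRingEnd ℂ) T) ^ 2 := by
    rw [← key T]; ring
  rw [key Sij, key Y, key Wij, hs2, hQ, hQc, h4, key T]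
  ring
end

section
/- Let Y, Z, T, W_ij, S_ij ∈ ℂ and W_ii, b ∈ ℝ with Y ≠ 0, Z = Y⁻¹, and T ≠ 0. If S_ij = (conj(Y) − i·b/2)·W_ii/|T|² − conj(Y)·W_ij/conj(T), then (as an identity in ℂ, with real numbers coerced) |W_ij|² = (1 − b·Im(Z))·W_ii²/|T|² − W_ii·conj(Z)·S_ij − W_ii·Z·conj(S_ij) + |Z|²·( |T|²·|S_ij|² + (b/2)²·W_ii²/|T|² + W_ii·b·Im(S_ij) ). -/
lemma abs_sq_eq (z : ℂ) : ((‖z‖ : ℂ)) ^ 2 = z * (starRingEnd ℂ) z := by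
  rw [Complex.mul_conj]
  norm_cast
  exact Complex.sq_norm z

lemma im_eq (z : ℂ) : (z.im : ℂ) = (z - (starRingEnd ℂ) z) / (2 * Complex.I) := by
  rw [Complex.sub_conj]
  field_simp [Complex.I_ne_zero]
  push_cast
  ring

set_option maxHeartbeats 2000000 in
/-- Extended Property 2: the absolute square of the voltage product. -/
theorem abs_sq_voltage_product_ext (Y Z T Wij Sij : ℂ) (Wii b : ℝ)
    (hY : Y ≠ 0) (hZ : Z = Y⁻¹) (hT : T ≠ 0)
    (hS : Sij = ((starRingEnd ℂ) Y - Complex.I * (b : ℂ) / 2) * (Wii : ℂ)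
        / ((‖T‖ : ℝ) ^ 2 : ℂ)
      - (starRingEnd ℂ) Y * Wij / (starRingEnd ℂ) T) :
    ((‖Wij‖ : ℝ) ^ 2 : ℂ) =
      (1 - (b : ℂ) * (Z.im : ℂ)) * (Wii : ℂ) ^ 2 / ((‖T‖ : ℝ) ^ 2 : ℂ)
      - (Wii : ℂ) * (starRingEnd ℂ) Z * Sij
      - (Wii : ℂ) * Z * (starRingEnd ℂ) Sij
      + ((‖Z‖ : ℝ) ^ 2 : ℂ) *
          ( ((‖T‖ : ℝ) ^ 2 : ℂ) * ((‖Sij‖ : ℝ) ^ 2 : ℂ)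
            + ((b : ℂ) / 2) ^ 2 * (Wii : ℂ) ^ 2 / ((‖T‖ : ℝ) ^ 2 : ℂ)
            + (Wii : ℂ) * (b : ℂ) * (Sij.im : ℂ) ) := by
  have hYc : (starRingEnd ℂ) Y ≠ 0 := by simpa using hY
  have hTc : (starRingEnd ℂ) T ≠ 0 := by simpa using hT
  have hZY : Z * Y = 1 := by rw [hZ]; field_simp
  have hZcYc : (starRingEnd ℂ) Z * (starRingEnd ℂ) Y = 1 := by
    rw [← map_mul, hZY, map_one]
  have hWij : Wij = (((starRingEnd ℂ) Y - Complex.I * (b : ℂ) / 2) * (Wii : ℂ)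
      / ((‖T‖ : ℝ) ^ 2 : ℂ) - Sij) * (starRingEnd ℂ) T / (starRingEnd ℂ) Y := by
    rw [hS]; field_simp; ring
  subst hZ
  rw [hWij]
  simp only [abs_sq_eq]
  simp only [im_eq, map_inv₀, map_mul, map_sub, map_div₀, map_add,
    Complex.conj_conj, Complex.conj_I, Complex.conj_ofReal, map_one, map_ofNat]
  clear hS hWij hZY hZcYc
  revert hYc hTc
  generalize (starRingEnd ℂ) Y = Yc
  generalize (starRingEnd ℂ) T = Tc
  generalize (starRingEnd ℂ) Sij = Sc
  intro hYc hTc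
  have hy : Y * Y⁻¹ = 1 := mul_inv_cancel₀ hY
  have hyc : Yc * Yc⁻¹ = 1 := mul_inv_cancel₀ hYc
  have ht : T * T⁻¹ = 1 := mul_inv_cancel₀ hT
  have htc : Tc * Tc⁻¹ = 1 := mul_inv_cancel₀ hTc
  have hI2 : Complex.I ^ 2 = -1 := Complex.I_sq
  have hIi : Complex.I⁻¹ = -Complex.I := Complex.inv_I
  linear_combination
    (-(T * Tc * Yc⁻¹ * T⁻¹ * Tc⁻¹ * Sij * (Wii:ℂ))
      - (1/2) * T * Tc * Yc⁻¹ * T⁻¹^2 * Tc⁻¹^2 * Complex.I * (Wii:ℂ)^2 * (b:ℂ)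
      + Yc * T * Tc * Yc⁻¹ * T⁻¹^2 * Tc⁻¹^2 * (Wii:ℂ)^2) * hy
    + (T * Tc * T⁻¹^2 * Tc⁻¹^2 * (Wii:ℂ)^2
      - T * Tc * Y⁻¹ * T⁻¹ * Tc⁻¹ * Sc * (Wii:ℂ)
      + (1/2) * T * Tc * Y⁻¹ * T⁻¹^2 * Tc⁻¹^2 * Complex.I * (Wii:ℂ)^2 * (b:ℂ)) * hyc
    + (Tc * T⁻¹ * Tc⁻¹^2 * (Wii:ℂ)^2
      - Tc * Yc⁻¹ * Tc⁻¹ * Sij * (Wii:ℂ)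
      - (1/2) * Tc * Yc⁻¹ * T⁻¹ * Tc⁻¹^2 * Complex.I * (Wii:ℂ)^2 * (b:ℂ)
      - Tc * Y⁻¹ * Tc⁻¹ * Sc * (Wii:ℂ)
      + (1/2) * Tc * Y⁻¹ * T⁻¹ * Tc⁻¹^2 * Complex.I * (Wii:ℂ)^2 * (b:ℂ)
      + (1/2) * Tc * Y⁻¹ * Yc⁻¹ * Tc⁻¹ * Complex.I * Sc * (Wii:ℂ) * (b:ℂ)
      - (1/2) * Tc * Y⁻¹ * Yc⁻¹ * Tc⁻¹ * Complex.I * Sij * (Wii:ℂ) * (b:ℂ)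
      - (1/4) * Tc * Y⁻¹ * Yc⁻¹ * T⁻¹ * Tc⁻¹^2 * Complex.I^2 * (Wii:ℂ)^2 * (b:ℂ)^2) * ht
    + (T⁻¹ * Tc⁻¹ * (Wii:ℂ)^2
      - Yc⁻¹ * Sij * (Wii:ℂ)
      - (1/2) * Yc⁻¹ * T⁻¹ * Tc⁻¹ * Complex.I * (Wii:ℂ)^2 * (b:ℂ)
      - Y⁻¹ * Sc * (Wii:ℂ)
      + (1/2) * Y⁻¹ * T⁻¹ * Tc⁻¹ * Complex.I * (Wii:ℂ)^2 * (b:ℂ)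
      + (1/2) * Y⁻¹ * Yc⁻¹ * Complex.I * Sc * (Wii:ℂ) * (b:ℂ)
      - (1/2) * Y⁻¹ * Yc⁻¹ * Complex.I * Sij * (Wii:ℂ) * (b:ℂ)
      - (1/4) * Y⁻¹ * Yc⁻¹ * T⁻¹ * Tc⁻¹ * Complex.I^2 * (Wii:ℂ)^2 * (b:ℂ)^2) * htc
    + (-(1/4) * Y⁻¹ * Yc⁻¹ * T⁻¹ * Tc⁻¹ * (Wii:ℂ)^2 * (b:ℂ)^2) * hI2
    + (-(1/2) * (b:ℂ) * (Wii:ℂ) * Sij * Yc⁻¹ * Y⁻¹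
      + (1/2) * (b:ℂ) * (Wii:ℂ) * Yc⁻¹ * Sc * Y⁻¹
      - (1/2) * (b:ℂ) * (Wii:ℂ)^2 * T⁻¹ * Tc⁻¹ * Yc⁻¹
      + (1/2) * (b:ℂ) * (Wii:ℂ)^2 * T⁻¹ * Tc⁻¹ * Y⁻¹) * hIi
end

section
/- Let Y, Z, T, W_ij, S_ij ∈ ℂ and W_ii, W_jj, l, b ∈ ℝ with Y ≠ 0, Z = Y⁻¹, and T ≠ 0. Assume S_ij = (conj(Y) − i·b/2)·W_ii/|T|² − conj(Y)·W_ij/conj(T) and (l : ℂ) = |Y|²·( W_ii/|T|² − W_ij/conj(T) − conj(W_ij)/T + W_jj ) − (b/2)²·W_ii/|T|² − b·Im(S_ij). Then (as an identity in ℂ, with real numbers coerced) W_jj = (1 − b·Im(Z))·W_ii/|T|² − conj(Z)·S_ij − Z·conj(S_ij) + |Z|²·( l + (b/2)²·W_ii/|T|² + b·Im(S_ij) ). -/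
set_option maxHeartbeats 1600000 in
/-- Extended Property 4: the voltage drop identity. -/
theorem voltage_drop_ext (Y Z T Wij Sij : ℂ) (Wii Wjj l b : ℝ)
    (hY : Y ≠ 0) (hZ : Z = Y⁻¹) (hT : T ≠ 0)
    (hS : Sij = ((starRingEnd ℂ) Y - Complex.I * (b : ℂ) / 2) * (Wii : ℂ)
        / ((‖T‖ : ℝ) ^ 2 : ℂ)
      - (starRingEnd ℂ) Y * Wij / (starRingEnd ℂ) T)
    (hl : (l : ℂ) = ((‖Y‖ : ℝ) ^ 2 : ℂ) *
        ( (Wii : ℂ) / ((‖T‖ : ℝ) ^ 2 : ℂ)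
          - Wij / (starRingEnd ℂ) T
          - (starRingEnd ℂ) Wij / T
          + (Wjj : ℂ) )
      - ((b : ℂ) / 2) ^ 2 * (Wii : ℂ) / ((‖T‖ : ℝ) ^ 2 : ℂ)
      - (b : ℂ) * (Sij.im : ℂ)) :
    (Wjj : ℂ) =
      (1 - (b : ℂ) * (Z.im : ℂ)) * (Wii : ℂ) / ((‖T‖ : ℝ) ^ 2 : ℂ)
      - (starRingEnd ℂ) Z * Sij - Z * (starRingEnd ℂ) Sij
      + ((‖Z‖ : ℝ) ^ 2 : ℂ) *
          ( (l : ℂ)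
            + ((b : ℂ) / 2) ^ 2 * (Wii : ℂ) / ((‖T‖ : ℝ) ^ 2 : ℂ)
            + (b : ℂ) * (Sij.im : ℂ) ) := by
  have hT2 : ((‖T‖ : ℝ) ^ 2 : ℂ) = T * (starRingEnd ℂ) T := by
    rw [Complex.mul_conj]; norm_cast; exact Complex.sq_norm T
  have hY2 : ((‖Y‖ : ℝ) ^ 2 : ℂ) = Y * (starRingEnd ℂ) Y := by
    rw [Complex.mul_conj]; norm_cast; exact Complex.sq_norm Y
  have hZ2 : ((‖Z‖ : ℝ) ^ 2 : ℂ) = Z * (starRingEnd ℂ) Z := by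
    rw [Complex.mul_conj]; norm_cast; exact Complex.sq_norm Z
  have himZ : ((Z.im : ℝ) : ℂ) = (Z - (starRingEnd ℂ) Z) / (2 * Complex.I) := by
    rw [Complex.sub_conj]; field_simp [Complex.I_ne_zero]; push_cast; ring
  have hZY : Z * Y = 1 := by rw [hZ]; field_simp
  have hZYc : (starRingEnd ℂ) Z * (starRingEnd ℂ) Y = 1 := by
    rw [← map_mul, hZY]; simp
  have hIinv : Complex.I⁻¹ = -Complex.I := Complex.inv_I
  clear hZ
  rw [hl, hS, himZ, hT2, hY2, hZ2]
  simp only [map_sub, map_mul, map_div₀, Complex.conj_conj, Complex.conj_I,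
    Complex.conj_ofReal, map_ofNat]
  linear_combination
    (-((b : ℂ) * (Wii : ℂ) * T⁻¹ * ((starRingEnd ℂ) T)⁻¹ / 2)
        * ((starRingEnd ℂ) Z - Z)) * hIinv
    + (T⁻¹ * ((starRingEnd ℂ) T)⁻¹ * (Wii : ℂ) - T⁻¹ * (starRingEnd ℂ) Wij
        - T⁻¹ * ((starRingEnd ℂ) T)⁻¹ * (starRingEnd ℂ) Y * (starRingEnd ℂ) Z * (Wii : ℂ)
        + ((starRingEnd ℂ) T)⁻¹ * (starRingEnd ℂ) Y * (starRingEnd ℂ) Z * Wij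
        + T⁻¹ * (starRingEnd ℂ) Y * (starRingEnd ℂ) Z * (starRingEnd ℂ) Wij
        - (starRingEnd ℂ) Y * (starRingEnd ℂ) Z * (Wjj : ℂ)) * hZY
    + (T⁻¹ * (starRingEnd ℂ) Wij - (Wjj : ℂ)) * hZYc
end

section
/- Let Y, Z, T, W_ij ∈ ℂ and W_ii, W_jj, b ∈ ℝ with Y ≠ 0, Z = Y⁻¹, and T ≠ 0, and define S_ij = (conj(Y) − i·b/2)·W_ii/|T|² − conj(Y)·W_ij/conj(T) and S_ji = (conj(Y) − i·b/2)·W_jj − conj(Y)·conj(W_ij)/T (real numbers coerced to ℂ). Then |W_ij|² ≤ W_ii·W_jj holds if and only if there exists l ∈ ℝ such that S_ij + S_ji = Z·( l + (b/2)²·W_ii/|T|² + b·Im(S_ij) ) − i·(b/2)·( W_ii/|T|² + W_jj ) and |S_ij|² ≤ (W_ii/|T|²)·l. -/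
set_option maxHeartbeats 2000000


/-- Appendix theorem: W-E-SOC is equivalent to C-E-SOC. -/
theorem wesoc_iff_cesoc (Y Z T Wij Sij Sji : ℂ) (Wii Wjj b : ℝ)
    (hY : Y ≠ 0) (hZ : Z = Y⁻¹) (hT : T ≠ 0)
    (hSij : Sij = ((starRingEnd ℂ) Y - Complex.I * (b : ℂ) / 2) * (Wii : ℂ)
        / ((‖T‖ : ℝ) ^ 2 : ℂ)
      - (starRingEnd ℂ) Y * Wij / (starRingEnd ℂ) T)
    (hSji : Sji = ((starRingEnd ℂ) Y - Complex.I * (b : ℂ) / 2) * (Wjj : ℂ)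
      - (starRingEnd ℂ) Y * (starRingEnd ℂ) Wij / T) :
    ‖Wij‖ ^ 2 ≤ Wii * Wjj ↔
      ∃ l : ℝ,
        Sij + Sji = Z * ( (l : ℂ)
            + ((b : ℂ) / 2) ^ 2 * (Wii : ℂ) / ((‖T‖ : ℝ) ^ 2 : ℂ)
            + (b : ℂ) * (Sij.im : ℂ) )
          - Complex.I * ((b : ℂ) / 2) *
              ( (Wii : ℂ) / ((‖T‖ : ℝ) ^ 2 : ℂ) + (Wjj : ℂ) ) ∧
        ‖Sij‖ ^ 2 ≤ (Wii / ‖T‖ ^ 2) * l := by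
  have hTc : (starRingEnd ℂ) T ≠ 0 := by simpa using hT
  have habsT : ((‖T‖ : ℂ)) ^ 2 = T * (starRingEnd ℂ) T := by
    rw [Complex.mul_conj]
    norm_cast
    exact (Complex.sq_norm T)
  have habsT0 : ((‖T‖ : ℂ)) ^ 2 ≠ 0 := by
    rw [habsT]; exact mul_ne_zero hT hTc
  have ht2 : (0:ℝ) < ‖T‖ ^ 2 := by
    have := norm_pos_iff.mpr hT
    positivity
  set l0 : ℝ := Complex.normSq Y * (Wii / ‖T‖ ^ 2 + Wjj
      - 2 * (Wij / (starRingEnd ℂ) T).re)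
      - (b/2)^2 * (Wii / ‖T‖ ^ 2) - b * Sij.im with hl0
  have hre : ∀ z : ℂ, ((z.re : ℝ) : ℂ) = (z + (starRingEnd ℂ) z) / 2 := by
    intro z; rw [Complex.add_conj]; push_cast; ring
  have him : ∀ z : ℂ, ((z.im : ℝ) : ℂ) = (z - (starRingEnd ℂ) z) * (-Complex.I) / 2 := by
    intro z; rw [Complex.sub_conj]
    push_cast
    linear_combination (z.im : ℂ) * Complex.I_sq
  have hnY : ((Complex.normSq Y : ℝ) : ℂ) = Y * (starRingEnd ℂ) Y := (Complex.mul_conj Y).symm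
  have habs2 : ∀ z : ℂ, ((‖z‖ : ℝ) : ℂ) ^ 2 = z * (starRingEnd ℂ) z := by
    intro z; rw [← Complex.ofReal_pow, Complex.sq_norm, Complex.mul_conj]
  have hcSij : (starRingEnd ℂ) Sij = (Y - (starRingEnd ℂ) Complex.I * (b : ℂ) / 2) * (Wii : ℂ)
      / ((‖T‖ : ℝ) ^ 2 : ℂ) - Y * (starRingEnd ℂ) Wij / T := by
    rw [hSij]
    simp only [map_sub, map_mul, map_div₀, map_ofNat, Complex.conj_conj,
      Complex.conj_ofReal, map_pow]
  have heq : Sij + Sji = Z * ( (l0 : ℂ)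
      + ((b : ℂ) / 2) ^ 2 * (Wii : ℂ) / ((‖T‖ : ℝ) ^ 2 : ℂ)
      + (b : ℂ) * (Sij.im : ℂ) )
      - Complex.I * ((b : ℂ) / 2) *
        ( (Wii : ℂ) / ((‖T‖ : ℝ) ^ 2 : ℂ) + (Wjj : ℂ) ) := by
    rw [hl0]
    push_cast
    rw [hnY, hre, hZ]
    generalize Sij.im = m
    rw [hSij, hSji]
    simp only [map_div₀, Complex.conj_conj]
    rw [habsT]
    linear_combination (-( (starRingEnd ℂ) Y *
      ((Wii : ℂ) / (T * (starRingEnd ℂ) T) + (Wjj : ℂ)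
        - Wij / (starRingEnd ℂ) T - (starRingEnd ℂ) Wij / T))) * inv_mul_cancel₀ hY
  have hkey : (Wii / ‖T‖ ^ 2) * l0 - ‖Sij‖ ^ 2
      = (Complex.normSq Y / ‖T‖ ^ 2) * (Wii * Wjj - ‖Wij‖ ^ 2) := by
    have : (((Wii / ‖T‖ ^ 2) * l0 - ‖Sij‖ ^ 2 : ℝ) : ℂ)
        = (((Complex.normSq Y / ‖T‖ ^ 2) * (Wii * Wjj - ‖Wij‖ ^ 2) : ℝ) : ℂ) := by
      push_cast
      rw [habs2 Sij, habs2 Wij, hl0]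
      push_cast
      rw [hnY, hre, him]
      rw [hcSij, hSij]
      simp only [Complex.conj_I, map_div₀, Complex.conj_conj]
      rw [habsT]
      linear_combination (-(((b : ℂ)/2)^2 * ((Wii : ℂ) / (T * (starRingEnd ℂ) T))^2))
        * Complex.I_sq
    exact_mod_cast this
  have hYpos : 0 < Complex.normSq Y := Complex.normSq_pos.mpr hY
  constructor
  · intro h
    refine ⟨l0, heq, ?_⟩
    nlinarith [mul_nonneg (le_of_lt (div_pos hYpos ht2)) (sub_nonneg.mpr h)]
  · rintro ⟨l, hleq, hlin⟩
    have hZ0 : Z ≠ 0 := by rw [hZ]; exact inv_ne_zero hY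
    have hll : l = l0 := by
      have h2 : Z * ((l : ℂ) - (l0 : ℂ)) = 0 := by
        linear_combination heq - hleq
      rcases mul_eq_zero.mp h2 with h | h
      · exact absurd h hZ0
      · have : (l : ℂ) = (l0 : ℂ) := by linear_combination h
        exact_mod_cast this
    rw [hll] at hlin
    nlinarith [div_pos hYpos ht2]
end
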